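/- Let W be a symmetric 3×3×3 real tensor, x ∈ ℝ with x ≠ 0, and T = W rotated by the Givens rotation G^{(1,3)}(arctan x) on all three modes. If |W₁₁₁| = |T₁₁₁| > 0, W₁₁₁W₁₁₂ = W₁₂₂W₂₂₂, T₁₁₁T₁₁₂ = T₁₂₂T₂₂₂, and W₁₁₃ = W₂₂₃ = T₁₁₃ = T₂₂₃ = 0, then W₁₁₂ = W₁₂₂ = T₁₁₂ = T₁₂₂ = 0. -/
import Mathlib


open Real

theorem stmt_10 (W : Fin 3 → Fin 3 → Fin 3 → ℝ)
    (hsymm : ∀ a b c, W a b c = W b a c ∧ W a b c = W a c b)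
    (x : ℝ) (hx : x ≠ 0)
    (G : Matrix (Fin 3) (Fin 3) ℝ)
    (hG : G = !![cos (arctan x), 0, -sin (arctan x); 0, 1, 0;
                 sin (arctan x), 0, cos (arctan x)])
    (T : Fin 3 → Fin 3 → Fin 3 → ℝ)
    (hT : ∀ i j k, T i j k = ∑ a : Fin 3, ∑ b : Fin 3, ∑ c : Fin 3,
        W a b c * G a i * G b j * G c k)
    (habs : |W 0 0 0| = |T 0 0 0|) (hpos : 0 < |W 0 0 0|)
    (hW12 : W 0 0 0 * W 0 0 1 = W 0 1 1 * W 1 1 1)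
    (hT12 : T 0 0 0 * T 0 0 1 = T 0 1 1 * T 1 1 1)
    (hz : W 0 0 2 = 0 ∧ W 1 1 2 = 0 ∧ T 0 0 2 = 0 ∧ T 1 1 2 = 0) :
    W 0 0 1 = 0 ∧ W 0 1 1 = 0 ∧ T 0 0 1 = 0 ∧ T 0 1 1 = 0 := by
  have hs : sin (arctan x) ≠ 0 := by
    rw [Real.sin_arctan]
    exact div_ne_zero hx (by positivity)
  have hW000 : W 0 0 0 ≠ 0 := fun h => by simp [h] at hpos
  have hT000 : T 0 0 0 ≠ 0 := fun h => by rw [h] at habs; simp [habs] at hpos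
  -- W 1 1 0 = W 0 1 1
  have hWs : W 1 1 0 = W 0 1 1 := by
    rw [(hsymm 1 1 0).2, (hsymm 1 0 1).1]
  have hWs2 : W 2 1 1 = W 1 1 2 := by
    rw [(hsymm 2 1 1).1, (hsymm 1 2 1).2]
  -- T 1 1 2 = - sin * W 1 1 0
  have h112 : T 1 1 2 = - sin (arctan x) * W 1 1 0 := by
    rw [hT]
    simp [hG, Fin.sum_univ_three, hz.2.1]
    ring
  have hW011 : W 0 1 1 = 0 := by
    have := hz.2.2.2
    rw [h112, hWs] at this
    rcases mul_eq_zero.1 this with h | h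
    · exact absurd (neg_eq_zero.1 h) hs
    · exact h
  have hW001 : W 0 0 1 = 0 := by
    rw [hW011, zero_mul] at hW12
    exact (mul_eq_zero.1 hW12).resolve_left hW000
  have hT011 : T 0 1 1 = 0 := by
    rw [hT]
    simp [hG, Fin.sum_univ_three, hz.2.1, hW011, hWs2]
  have hT001 : T 0 0 1 = 0 := by
    rw [hT011, zero_mul] at hT12
    exact (mul_eq_zero.1 hT12).resolve_left hT000
  exact ⟨hW001, hW011, hT001, hT011⟩
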